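/- arXiv:0809.1401 — 5 statements merged into one kernel-verified Lean document; each statement's English description precedes it below -/
import Mathlib

section
/- Let q be a positive real number and z1, z2, z3 nonzero complex numbers with z1*z2*z3 = 1. Let M be the linear operator on C^6 (with basis f1,...,f6) defined by M(f1) = z1*z3*f2, M(f2) = q*z2*z3*f1, M(f3) = (q-1)*z1*z3*f2 + z1*z2*f6, M(f4) = (q-1)*q*z2*z3*f3 + q*z1*z3*f5, M(f5) = (q-1)*q*z2*z3*f1 + z1*z2*f4, M(f6) = q*z2*z3*f3. Then the characteristic polynomial of M equals (x^2 - q*z1)(x^2 - q*z2)(x^2 - q*z3). -/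
open Polynomial Matrix

/-- The matrix of the Iwahori-Hecke operator `L_B` on the six-dimensional space of
Iwahori-fixed vectors, in the basis `f1, ..., f6` (columns are images of basis vectors). -/
def LB (q z1 z2 z3 : ℂ) : Matrix (Fin 6) (Fin 6) ℂ :=
  !![0,       q*z2*z3, 0,           0,             (q-1)*q*z2*z3, 0;
     z1*z3,   0,       (q-1)*z1*z3, 0,             0,             0;
     0,       0,       0,           (q-1)*q*z2*z3, 0,             q*z2*z3;
     0,       0,       0,           0,             z1*z2,         0;
     0,       0,       0,           q*z1*z3,       0,             0;
     0,       0,       z1*z2,       0,             0,             0]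

lemma cons_val_five' {α : Type*} (x : α) (u : Fin 5 → α) :
    Matrix.vecCons x u 5 = u 4 := rfl

set_option maxHeartbeats 1000000 in
set_option maxRecDepth 8000 in
lemma det6_aux {R} [CommRing R] (x a b c d e f g h i : R) :
    Matrix.det !![x,a,0,0,b,0; c,x,d,0,0,0; 0,0,x,e,0,f; 0,0,0,x,g,0; 0,0,0,h,x,0; 0,0,i,0,0,x]
    = (x^2 - a*c) * (x^2 - g*h) * (x^2 - f*i) := by
  simp [Matrix.det_succ_row_zero, Fin.sum_univ_succ, Fin.succAbove,
    Fin.castSucc, Fin.castAdd, Fin.castLE]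
  ring

theorem charpoly_LB (q : ℝ) (hq : 0 < q) (z1 z2 z3 : ℂ)
    (hz1 : z1 ≠ 0) (hz2 : z2 ≠ 0) (hz3 : z3 ≠ 0) (h : z1 * z2 * z3 = 1) :
    (LB (q : ℂ) z1 z2 z3).charpoly =
      (X ^ 2 - C ((q : ℂ) * z1)) * (X ^ 2 - C ((q : ℂ) * z2)) * (X ^ 2 - C ((q : ℂ) * z3)) := by
  have hcm : charmatrix (LB (q : ℂ) z1 z2 z3) =
      !![X, -C ((q:ℂ)*z2*z3), 0, 0, -C (((q:ℂ)-1)*q*z2*z3), 0;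
         -C (z1*z3), X, -C (((q:ℂ)-1)*z1*z3), 0, 0, 0;
         0, 0, X, -C (((q:ℂ)-1)*q*z2*z3), 0, -C ((q:ℂ)*z2*z3);
         0, 0, 0, X, -C (z1*z2), 0;
         0, 0, 0, -C ((q:ℂ)*z1*z3), X, 0;
         0, 0, -C (z1*z2), 0, 0, X] := by
    apply Matrix.ext
    intro i j
    fin_cases i <;> fin_cases j <;>
      simp [charmatrix_apply, LB, cons_val_five', Matrix.vecHead, Matrix.vecTail]
  rw [Matrix.charpoly, hcm, det6_aux]
  have e1 : -C ((q:ℂ)*z2*z3) * -C (z1*z3) = C ((q:ℂ) * z3) := by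
    rw [neg_mul_neg, ← C_mul]
    congr 1
    have : (q:ℂ)*z2*z3 * (z1*z3) = (q:ℂ) * z3 * (z1 * z2 * z3) := by ring
    rw [this, h, mul_one]
  have e2 : -C (z1*z2) * -C ((q:ℂ)*z1*z3) = C ((q:ℂ) * z1) := by
    rw [neg_mul_neg, ← C_mul]
    congr 1
    have : z1*z2 * ((q:ℂ)*z1*z3) = (q:ℂ) * z1 * (z1 * z2 * z3) := by ring
    rw [this, h, mul_one]
  have e3 : -C ((q:ℂ)*z2*z3) * -C (z1*z2) = C ((q:ℂ) * z2) := by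
    rw [neg_mul_neg, ← C_mul]
    congr 1
    have : (q:ℂ)*z2*z3 * (z1*z2) = (q:ℂ) * z2 * (z1 * z2 * z3) := by ring
    rw [this, h, mul_one]
  rw [e1, e2, e3]
  ring
end

section
/- Let q be a positive real number and z1, z2, z3 nonzero complex numbers with z1*z2*z3 = 1. Let M be the 6x6 matrix as above describing L_B. Then det(M) = -q^3. -/
open Polynomial Matrix

/-- Auxiliary permutation of columns making `LB` upper triangular. -/
def permLB : Equiv.Perm (Fin 6) :=
  ⟨![1, 0, 5, 4, 3, 2], ![1, 0, 5, 4, 3, 2], by decide, by decide⟩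

theorem sign_permLB : Equiv.Perm.sign permLB = -1 := by decide

theorem det_LB (q : ℝ) (hq : 0 < q) (z1 z2 z3 : ℂ)
    (hz1 : z1 ≠ 0) (hz2 : z2 ≠ 0) (hz3 : z3 ≠ 0) (h : z1 * z2 * z3 = 1) :
    (LB (q : ℂ) z1 z2 z3).det = -(q : ℂ) ^ 3 := by
  have hsub : ((LB (q : ℂ) z1 z2 z3).submatrix id permLB) =
      !![(q:ℂ)*z2*z3, 0, 0, ((q:ℂ)-1)*(q:ℂ)*z2*z3, 0, 0;
         0, z1*z3, 0, 0, 0, ((q:ℂ)-1)*z1*z3;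
         0, 0, (q:ℂ)*z2*z3, 0, ((q:ℂ)-1)*(q:ℂ)*z2*z3, 0;
         0, 0, 0, z1*z2, 0, 0;
         0, 0, 0, 0, (q:ℂ)*z1*z3, 0;
         0, 0, 0, 0, 0, z1*z2] := by
    rw [← Matrix.etaExpand_eq ((LB (q : ℂ) z1 z2 z3).submatrix id permLB)]
    rfl
  have htri : ((LB (q : ℂ) z1 z2 z3).submatrix id permLB).BlockTriangular id := by
    rw [hsub]
    intro i j hij
    fin_cases i <;> fin_cases j <;> first | rfl | exact absurd hij (by decide)
  have hdet := Matrix.det_permute' permLB (LB (q : ℂ) z1 z2 z3)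
  rw [Matrix.det_of_upperTriangular htri] at hdet
  have hprod : ∏ i : Fin 6, ((LB (q : ℂ) z1 z2 z3).submatrix id permLB) i i = (q:ℂ)^3 := by
    rw [hsub]
    simp [Fin.prod_univ_succ]
    linear_combination ((q:ℂ)^3 * ((z1*z2*z3)^2 + 1) * (z1*z2*z3 + 1)) * h
  rw [hprod, sign_permLB] at hdet
  push_cast at hdet
  linear_combination hdet
end

section
/- Let q be a positive real number and z a complex number with z^3 = 1. Set z1 = z/q, z2 = z, z3 = q*z, and let M be the 6x6 L_B matrix with these parameters (M(f1) = z1*z3*f2, M(f2) = q*z2*z3*f1, M(f3) = (q-1)*z1*z3*f2 + z1*z2*f6, M(f4) = (q-1)*q*z2*z3*f3 + q*z1*z3*f5, M(f5) = (q-1)*q*z2*z3*f1 + z1*z2*f4, M(f6) = q*z2*z3*f3). Then the vector phi = f1 - (1/q)*f2 - (1/q)*f3 - (1/q^3)*f4 + (1/q^2)*f5 + (1/q^2)*f6 satisfies M(phi) = -z^2 * phi. -/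
open Matrix

theorem steinberg_eigenvector (q : ℝ) (hq : 0 < q) (z : ℂ) (hz : z ^ 3 = 1) :
    (LB (q : ℂ) (z / (q : ℂ)) z ((q : ℂ) * z)).mulVec
        ![1, -1/(q : ℂ), -1/(q : ℂ), -1/(q : ℂ)^3, 1/(q : ℂ)^2, 1/(q : ℂ)^2] =
      (-z ^ 2) • ![1, -1/(q : ℂ), -1/(q : ℂ), -1/(q : ℂ)^3, 1/(q : ℂ)^2, 1/(q : ℂ)^2] := by
  have hq0 : (q : ℂ) ≠ 0 := by exact_mod_cast hq.ne'
  funext i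
  fin_cases i <;>
    simp [LB, mulVec, dotProduct, Fin.sum_univ_succ, Matrix.cons_val_succ,
      show (5:Fin 6) = (4:Fin 5).succ from rfl, show (4:Fin 5) = (3:Fin 4).succ from rfl] <;>
    field_simp <;> ring
end

section
/- Let q be a positive real number and w a complex number with |w| = 1 (or simply w nonzero). Set z1 = q^{1/2}*w, z2 = q^{-1/2}*w, z3 = w^{-2}. Let M be the 6x6 L_B matrix with these parameters (as in the standard formula). Then the subspace W spanned by v1 = f1 + f2, v2 = f3 + f5, v3 = f4 + f6 is invariant under M, and the characteristic polynomial of M restricted to W equals (x - q^{1/2}*w^{-1})*(x^2 - q^{3/2}*w); in particular the eigenvalues of M on W are q^{1/2}*w^{-1} and the two square roots of q^{3/2}*w. -/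
open Polynomial Matrix

private lemma cval5' {α : Type*} (a : α) (u : Fin 5 → α) : vecCons a u (5 : Fin 6) = u 4 := rfl

private lemma cval5 {α : Type*} (a b c d e f : α) : ![a,b,c,d,e,f] 5 = f := rfl

set_option maxHeartbeats 1600000 in
theorem type_d_LB_restriction (q : ℝ) (hq : 0 < q) (w : ℂ) (hw : w ≠ 0) :
    let s : ℂ := ((q ^ ((1 : ℝ)/2) : ℝ) : ℂ)
    let M := LB (q : ℂ) (s * w) (s⁻¹ * w) ((w ^ 2)⁻¹)
    let v : Fin 3 → (Fin 6 → ℂ) :=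
      ![![1, 1, 0, 0, 0, 0], ![0, 0, 1, 0, 1, 0], ![0, 0, 0, 1, 0, 1]]
    LinearIndependent ℂ v ∧
    ∃ A : Matrix (Fin 3) (Fin 3) ℂ,
      (∀ i, M.mulVec (v i) = ∑ j, A j i • v j) ∧
      A.charpoly = (X - C (s * w⁻¹)) * (X ^ 2 - C (s ^ 3 * w)) := by
  intro s M v
  have hs2 : s * s = (q : ℂ) := by
    have : (q : ℝ) ^ ((1:ℝ)/2) * (q : ℝ) ^ ((1:ℝ)/2) = q := by
      rw [← Real.rpow_add hq]; norm_num
    simp only [s, ← Complex.ofReal_mul, this]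
  have hs : s ≠ 0 := by
    intro h
    rw [h, mul_zero] at hs2
    exact_mod_cast (ne_of_gt hq) (by exact_mod_cast hs2.symm)
  constructor
  · rw [Fintype.linearIndependent_iff]
    intro g h
    have h0 := congrFun h 0
    have h2 := congrFun h 2
    have h3 := congrFun h 3
    simp [v, Fin.sum_univ_three, Matrix.vecHead, Matrix.vecTail] at h0 h2 h3
    intro i; fin_cases i <;> assumption
  · refine ⟨!![s * w⁻¹, ((q:ℂ)-1) * s * w⁻¹, 0;
               0, 0, s^3 * w⁻¹;
               0, w^2, 0], ?_, ?_⟩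
    · intro i
      funext k
      fin_cases i <;> fin_cases k <;>
        simp [M, v, LB, Matrix.mulVec, dotProduct, Fin.sum_univ_six,
          Fin.sum_univ_three, cval5, cval5'] <;>
        (try simp only [Matrix.vecHead, Matrix.vecTail, Function.comp_apply]) <;>
        (try rw [← hs2]) <;> field_simp <;> ring
    · rw [Matrix.charpoly, Matrix.det_fin_three]
      simp [charmatrix_apply, Matrix.diagonal]
      try simp only [Matrix.vecHead, Matrix.vecTail, Function.comp_apply]
      try simp only [map_zero, mul_zero, zero_mul, add_zero, sub_zero]
      have hcb : C w⁻¹ * C w = (1 : Polynomial ℂ) := by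
        rw [← C_mul, inv_mul_cancel₀ hw, C_1]
      linear_combination (C s ^ 4 * C w⁻¹ - X * C s ^ 3) * C w * hcb
end

section
/- Let q > 1 be a real number, z1, z2, z3 nonzero complex numbers with z1*z2*z3 = 1, N the 3x3 matrix defined by N(g1) = q*z3*g1 + (q-1)*q*z3*g2 + (q-1)*q^2*z3*g3, N(g2) = q*z2*g2 + (q-1)*q*z2*g3, N(g3) = q*z1*g3, and M the 6x6 L_B matrix with the same parameters. Then both M and N are invertible: det(N) = q^3*z1*z2*z3 = q^3 ≠ 0 and det(M) = -q^3 ≠ 0. -/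
open Matrix

/-- The matrix of the parahoric edge operator `L_E` on the three-dimensional space of
`E`-fixed vectors, in the basis `g1, g2, g3` (columns are images of basis vectors). -/
def LEmat (q z1 z2 z3 : ℂ) : Matrix (Fin 3) (Fin 3) ℂ :=
  !![q*z3,         0,           0;
     (q-1)*q*z3,   q*z2,        0;
     (q-1)*q^2*z3, (q-1)*q*z2,  q*z1]

set_option maxRecDepth 8000 in
set_option maxHeartbeats 1600000 in
theorem LB_LE_invertible (q : ℝ) (hq : 1 < q) (z1 z2 z3 : ℂ)
    (hz1 : z1 ≠ 0) (hz2 : z2 ≠ 0) (hz3 : z3 ≠ 0) (h : z1 * z2 * z3 = 1) :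
    (LEmat (q : ℂ) z1 z2 z3).det = (q : ℂ) ^ 3 ∧
    (LB (q : ℂ) z1 z2 z3).det = -(q : ℂ) ^ 3 ∧
    (LEmat (q : ℂ) z1 z2 z3).det ≠ 0 ∧
    (LB (q : ℂ) z1 z2 z3).det ≠ 0 ∧
    IsUnit (LEmat (q : ℂ) z1 z2 z3) ∧
    IsUnit (LB (q : ℂ) z1 z2 z3) := by
  have hqe : (q : ℂ) ^ 3 ≠ 0 := pow_ne_zero 3 (by
    simpa using ne_of_gt (lt_trans one_pos hq))
  have hLE : (LEmat (q : ℂ) z1 z2 z3).det = (q : ℂ) ^ 3 := by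
    simp [LEmat, Matrix.det_fin_three]
    linear_combination (q:ℂ)^3 * h
  have hLB : (LB (q : ℂ) z1 z2 z3).det = -(q : ℂ) ^ 3 := by
    simp [LB, Matrix.det_succ_row_zero, Fin.sum_univ_succ, Fin.succAbove,
      Fin.castSucc, Fin.castAdd, Fin.castLE]
    linear_combination (-(q:ℂ)^3 * ((z1*z2*z3)^3+(z1*z2*z3)^2+(z1*z2*z3)+1)) * h
  refine ⟨hLE, hLB, by rw [hLE]; exact hqe, by rw [hLB]; exact neg_ne_zero.mpr hqe, ?_, ?_⟩
  · exact (Matrix.isUnit_iff_isUnit_det _).mpr (isUnit_iff_ne_zero.mpr (by rw [hLE]; exact hqe))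
  · exact (Matrix.isUnit_iff_isUnit_det _).mpr
      (isUnit_iff_ne_zero.mpr (by rw [hLB]; exact neg_ne_zero.mpr hqe))
end
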